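/- arXiv:1704.05382 — 5 statements merged into one kernel-verified Lean document; each statement's English description precedes it below -/
import Mathlib

section
/- Let p be a prime, let k be a field, and suppose that the characteristic of k does not divide p−1. Let a : ℕ → k be the p-pertinent sequence, i.e. a(n) = 0 if p ∣ n and a(n) = 1 otherwise. Then (1) a satisfies the polynomial x^p − 1, i.e. a(n+p) = a(n) for all n; and (2) a does not satisfy any nonzero polynomial of degree strictly less than p, i.e. for every nonzero polynomial f = Σ_{i=0}^{m} f_i x^i in k[x] with m < p there exists n with Σ_{i=0}^{m} f_i · a(n+i) ≠ 0. Consequently the minimal polynomial of the p-pertinent sequence is x^p − 1. -/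
/-- Let `p` be a prime, `k` a field whose characteristic does not divide
`p - 1`, and let `a : ℕ → k` be the `p`-pertinent sequence (`a n = 0` if `p ∣ n`, `a n = 1`
otherwise).  Then `a` satisfies the polynomial `x^p - 1` (i.e. `a (n + p) = a n` for all `n`),
and `a` satisfies no nonzero polynomial of degree strictly less than `p`; hence the minimal
polynomial of the `p`-pertinent sequence is `x^p - 1`. -/
theorem p_pertinent_minimal_poly_char_not_dvd
    (p : ℕ) (hp : p.Prime) (k : Type*) [Field k]
    (hchar : ¬ (ringChar k ∣ p - 1))
    (a : ℕ → k) (ha : ∀ n : ℕ, a n = if p ∣ n then 0 else 1) :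
    (∀ n : ℕ, a (n + p) = a n) ∧
    (∀ f : Polynomial k, f ≠ 0 → f.natDegree < p →
      ∃ n : ℕ, ∑ i ∈ Finset.range (f.natDegree + 1), f.coeff i * a (n + i) ≠ 0) := by
  have hp0 : 0 < p := hp.pos
  constructor
  · intro n
    rw [ha, ha]
    simp [Nat.dvd_add_self_right]
  · intro f hf hm
    by_contra hcon
    push_neg at hcon
    set m := f.natDegree with hmdef
    set T : k := ∑ i ∈ Finset.range (m + 1), f.coeff i with hT
    -- divisibility characterization
    have hdvd : ∀ i j : ℕ, i < p → j < p → (p ∣ (2 * p - i + j) ↔ j = i) := by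
      intro i j hi hj
      constructor
      · rintro ⟨c, hc⟩
        have h1 : 1 < c := by
          by_contra h
          push_neg at h
          interval_cases c <;> omega
        have h3 : c < 3 := by
          by_contra h
          push_neg at h
          have : p * 3 ≤ p * c := Nat.mul_le_mul_left _ h
          omega
        have hc2 : c = 2 := by omega
        subst hc2
        omega
      · rintro rfl
        exact ⟨2, by omega⟩
    -- every coefficient equals T
    have key : ∀ i ∈ Finset.range (m + 1), f.coeff i = T := by
      intro i hi
      have hi' : i < p := lt_of_lt_of_le (Finset.mem_range.mp hi) (by omega)
      have h := hcon (2 * p - i)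
      have hsum : ∑ j ∈ Finset.range (m + 1), f.coeff j * a (2 * p - i + j)
          = ∑ j ∈ Finset.range (m + 1), (f.coeff j - if j = i then f.coeff j else 0) := by
        apply Finset.sum_congr rfl
        intro j hj
        have hj' : j < p := lt_of_lt_of_le (Finset.mem_range.mp hj) (by omega)
        rw [ha]
        simp only [hdvd i j hi' hj']
        split_ifs <;> ring
      rw [hsum, Finset.sum_sub_distrib, Finset.sum_ite_eq' (Finset.range (m + 1)) i f.coeff,
        if_pos hi] at h
      exact (sub_eq_zero.mp h).symm
    -- T = 0
    have hT0 : T = 0 := by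
      rcases eq_or_lt_of_le (Nat.succ_le_of_lt hm) with heq | hlt
      · -- m + 1 = p : use the characteristic hypothesis
        have hTsum : T = (m + 1 : ℕ) * T := by
          calc T = ∑ i ∈ Finset.range (m + 1), f.coeff i := hT
          _ = ∑ i ∈ Finset.range (m + 1), T := Finset.sum_congr rfl key
          _ = (m + 1 : ℕ) * T := by
              rw [Finset.sum_const, Finset.card_range, nsmul_eq_mul]
        have hne : ((p - 1 : ℕ) : k) ≠ 0 := fun h => hchar ((ringChar.spec k _).mp h)
        have hcalc : ((p - 1 : ℕ) : k) * T = 0 := by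
          have hcast : ((p - 1 : ℕ) : k) = (p : ℕ) - 1 := by
            push_cast [Nat.cast_sub hp.one_le]
            ring
          rw [hcast]
          rw [show m + 1 = p from heq] at hTsum
          linear_combination -hTsum
        rcases mul_eq_zero.mp hcalc with h | h
        · exact absurd h hne
        · exact h
      · -- m + 1 < p : a window with no multiple of p
        have h := hcon (2 * p + 1)
        have hsum : ∑ j ∈ Finset.range (m + 1), f.coeff j * a (2 * p + 1 + j)
            = ∑ j ∈ Finset.range (m + 1), f.coeff j := by
          apply Finset.sum_congr rfl
          intro j hj
          have hj' : j < p - 1 := lt_of_lt_of_le (Finset.mem_range.mp hj) (by omega)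
          rw [ha, if_neg, mul_one]
          rintro ⟨c, hc⟩
          have h1 : 2 < c := by
            by_contra hcc
            push_neg at hcc
            interval_cases c <;> omega
          have h3 : c < 3 := by
            by_contra hcc
            push_neg at hcc
            have : p * 3 ≤ p * c := Nat.mul_le_mul_left _ hcc
            omega
          omega
        rw [hsum] at h
        exact h
    -- contradiction with f ≠ 0
    have : f.coeff m ≠ 0 := Polynomial.leadingCoeff_ne_zero.mpr hf
    exact this ((key m (Finset.self_mem_range_succ m)).trans hT0)
end

section
/- Let p be a prime, let k be a field of prime characteristic q, and suppose q divides p−1. Let a : ℕ → k be the p-pertinent sequence, i.e. a(n) = 0 if p ∣ n and a(n) = 1 otherwise. Then (1) a satisfies the polynomial x^{p−1} + x^{p−2} + ⋯ + x + 1, i.e. Σ_{i=0}^{p−1} a(n+i) = 0 for all n; and (2) a does not satisfy any nonzero polynomial of degree strictly less than p−1. Consequently the minimal polynomial of the p-pertinent sequence in this case is x^{p−1} + x^{p−2} + ⋯ + x + 1. -/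
/-- Let `p` be a prime and `k` a field of prime characteristic `q` with
`q ∣ p - 1`.  Let `a : ℕ → k` be the `p`-pertinent sequence (`a n = 0` if `p ∣ n`, `a n = 1`
otherwise).  Then `a` satisfies the polynomial `x^(p-1) + x^(p-2) + ⋯ + x + 1`
(i.e. `∑_{i=0}^{p-1} a (n + i) = 0` for all `n`), and `a` satisfies no nonzero polynomial of
degree strictly less than `p - 1`; hence the minimal polynomial of the `p`-pertinent sequence
in this case is `x^(p-1) + ⋯ + x + 1`. -/
theorem p_pertinent_minimal_poly_char_dvd
    (p q : ℕ) (hp : p.Prime) (hq : q.Prime) (k : Type*) [Field k] [CharP k q]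
    (hqp : q ∣ p - 1)
    (a : ℕ → k) (ha : ∀ n : ℕ, a n = if p ∣ n then 0 else 1) :
    (∀ n : ℕ, ∑ i ∈ Finset.range p, a (n + i) = 0) ∧
    (∀ f : Polynomial k, f ≠ 0 → f.natDegree < p - 1 →
      ∃ n : ℕ, ∑ i ∈ Finset.range (f.natDegree + 1), f.coeff i * a (n + i) ≠ 0) := by
  have hp2 : 2 ≤ p := hp.two_le
  obtain ⟨m0, hm0⟩ : ∃ m0, p = m0 + 1 := ⟨p - 1, by omega⟩
  have hcast : ((p - 1 : ℕ) : k) = 0 := (CharP.cast_eq_zero_iff k q (p - 1)).mpr hqp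
  have hper : ∀ n, a (n + p) = a n := by
    intro n
    rw [ha, ha]; simp [Nat.dvd_add_self_right]
  constructor
  · intro n
    have key : ∀ n, ∑ i ∈ Finset.range p, a (n + i) = ∑ i ∈ Finset.range p, a i := by
      intro n
      induction n with
      | zero => simp
      | succ n ih =>
        rw [← ih, hm0, Finset.sum_range_succ, Finset.sum_range_succ']
        have h1 : a (n + 1 + m0) = a (n + 0) := by
          rw [show n + 1 + m0 = n + p by omega, show n + 0 = n from rfl, hper]
        rw [h1]
        congr 1
        apply Finset.sum_congr rfl
        intro i _
        congr 1
        omega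
    rw [key n, hm0, Finset.sum_range_succ']
    have h0 : a 0 = 0 := by rw [ha]; simp
    have h1 : ∀ i ∈ Finset.range m0, a (i + 1) = 1 := by
      intro i hi
      rw [ha, if_neg]
      intro hdvd
      have := Nat.le_of_dvd (by omega) hdvd
      simp [Finset.mem_range] at hi
      omega
    rw [h0, Finset.sum_congr rfl h1, Finset.sum_const, add_zero, Finset.card_range,
      nsmul_eq_mul, mul_one, show m0 = p - 1 by omega, hcast]
  · intro f hf hdeg
    by_contra hcon
    push_neg at hcon
    set m := f.natDegree with hm
    -- n = 1 : all a values are 1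
    have hsum1 : ∑ i ∈ Finset.range (m + 1), f.coeff i = 0 := by
      have := hcon 1
      rw [Finset.sum_congr rfl (fun i hi => ?_)] at this
      · exact this
      · rw [ha, if_neg, mul_one]
        intro hdvd
        have := Nat.le_of_dvd (by omega) hdvd
        simp [Finset.mem_range] at hi
        omega
    -- each coefficient vanishes
    have hcoeff : ∀ j, j ≤ m → f.coeff j = 0 := by
      intro j hj
      have hkey := hcon (p - j)
      have hval : ∀ i ∈ Finset.range (m + 1),
          f.coeff i * a (p - j + i) = f.coeff i * (if i = j then 0 else 1) := by
        intro i hi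
        simp only [Finset.mem_range] at hi
        congr 1
        rw [ha]
        by_cases hij : i = j
        · subst hij
          rw [show p - i + i = p by omega]
          simp
        · rw [if_neg, if_neg hij]
          intro hdvd
          obtain ⟨t, ht⟩ := hdvd
          have hb1 : p - j + i < 2 * p := by omega
          have hb2 : 0 < p - j + i := by omega
          have ht2 : t < 2 := by
            by_contra h
            push_neg at h
            have : 2 * p ≤ p * t := by
              calc 2 * p = p * 2 := by ring
              _ ≤ p * t := Nat.mul_le_mul_left p h
            omega
          interval_cases t <;> omega
      rw [Finset.sum_congr rfl hval] at hkey
      have split : ∀ i ∈ Finset.range (m + 1),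
          f.coeff i * (if i = j then (0 : k) else 1)
            = f.coeff i - (if i = j then f.coeff i else 0) := by
        intro i _
        by_cases hij : i = j <;> simp [hij]
      rw [Finset.sum_congr rfl split, Finset.sum_sub_distrib, hsum1,
        Finset.sum_ite_eq' (Finset.range (m + 1)) j f.coeff,
        if_pos (Finset.mem_range.mpr (by omega))] at hkey
      simpa using hkey
    apply hf
    ext n
    simp only [Polynomial.coeff_zero]
    by_cases hn : n ≤ m
    · exact hcoeff n hn
    · exact Polynomial.coeff_eq_zero_of_natDegree_lt (by omega)
end

section
/- Let p be a prime and let n ≥ 1 be an integer. Then, working modulo p, Σ_{j=1}^{p−1} (−1)^{j+1} · C(n,j) ≡ 0 (mod p) if p divides n, and Σ_{j=1}^{p−1} (−1)^{j+1} · C(n,j) ≡ 1 (mod p) if p does not divide n. Equivalently, setting b_0 = 0, b_j = (−1)^{j+1} for 1 ≤ j ≤ p−1, and b_j = 0 for j ≥ p, the sequence B_n = Σ_{j=0}^{n} C(n,j) b_j, taken modulo p, is the p-pertinent sequence. -/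
/-- For a prime `p` and `n ≥ 1`, working modulo `p`,
`∑_{j=1}^{p-1} (-1)^(j+1) * C(n, j)` is `0` if `p ∣ n` and `1` otherwise; i.e. the sequence
`B_n = ∑_{j=0}^{n} C(n, j) b_j` (with `b_0 = 0`, `b_j = (-1)^(j+1)` for `1 ≤ j ≤ p - 1`,
`b_j = 0` for `j ≥ p`), taken modulo `p`, is the `p`-pertinent sequence. -/
theorem alternating_binomial_sum_p_pertinent
    (p : ℕ) (hp : p.Prime) (n : ℕ) (hn : 1 ≤ n) :
    (∑ j ∈ Finset.Ico 1 p, (-1 : ZMod p) ^ (j + 1) * (n.choose j : ZMod p)) =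
      if p ∣ n then 0 else 1 := by
  haveI : Fact p.Prime := ⟨hp⟩
  have hp0 : 0 < p := hp.pos
  -- Step 1: replace C(n, j) by C(n % p, j) using Lucas
  have hstep : ∀ j ∈ Finset.Ico 1 p, (-1 : ZMod p) ^ (j + 1) * (n.choose j : ZMod p)
      = (-1 : ZMod p) ^ (j + 1) * ((n % p).choose j : ZMod p) := by
    intro j hj
    rw [Finset.mem_Ico] at hj
    have h := Choose.choose_modEq_choose_mod_mul_choose_div_nat (n := n) (k := j) (p := p)
    rw [Nat.mod_eq_of_lt hj.2, Nat.div_eq_of_lt hj.2, Nat.choose_zero_right, mul_one] at h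
    rw [(ZMod.natCast_eq_natCast_iff _ _ _).mpr h]
  rw [Finset.sum_congr rfl hstep]
  set r := n % p with hr
  have hrlt : r < p := Nat.mod_lt _ hp0
  by_cases hd : p ∣ n
  · have hr0 : r = 0 := Nat.eq_zero_of_dvd_of_lt (Nat.dvd_mod_iff (dvd_refl p) |>.mpr hd) hrlt
    simp only [hd, if_true]
    apply Finset.sum_eq_zero
    intro j hj
    rw [Finset.mem_Ico] at hj
    rw [hr0, Nat.choose_eq_zero_of_lt hj.1]
    simp
  · have hr1 : 1 ≤ r := Nat.one_le_iff_ne_zero.mpr (fun h => hd (Nat.dvd_of_mod_eq_zero h))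
    simp only [hd, if_false]
    -- restrict the sum to Ico 1 (r+1)
    have hsub : Finset.Ico 1 (r + 1) ⊆ Finset.Ico 1 p := by
      apply Finset.Ico_subset_Ico le_rfl hrlt
    rw [← Finset.sum_subset hsub (by
      intro j hj hj'
      rw [Finset.mem_Ico] at hj hj'
      have : r < j := by omega
      rw [Nat.choose_eq_zero_of_lt this]
      simp)]
    -- alternating sum identity
    have halt : ∑ j ∈ Finset.range (r + 1), (-1 : ZMod p) ^ j * (r.choose j : ZMod p) = 0 := by
      have := Int.alternating_sum_range_choose (n := r)
      rw [if_neg (by omega)] at this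
      have := congrArg (fun z : ℤ => (z : ZMod p)) this
      push_cast at this
      simpa using this
    have hsplit : ∑ j ∈ Finset.range (r + 1), (-1 : ZMod p) ^ j * (r.choose j : ZMod p)
        = (-1 : ZMod p) ^ 0 * (r.choose 0 : ZMod p)
          + ∑ j ∈ Finset.Ico 1 (r + 1), (-1 : ZMod p) ^ j * (r.choose j : ZMod p) := by
      rw [Finset.range_eq_Ico, Finset.sum_eq_sum_Ico_succ_bot (by omega)]
    have hneg : ∑ j ∈ Finset.Ico 1 (r + 1), (-1 : ZMod p) ^ (j + 1) * (r.choose j : ZMod p)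
        = -∑ j ∈ Finset.Ico 1 (r + 1), (-1 : ZMod p) ^ j * (r.choose j : ZMod p) := by
      rw [← Finset.sum_neg_distrib]
      apply Finset.sum_congr rfl
      intro j _
      ring
    rw [hneg]
    rw [halt] at hsplit
    simp only [pow_zero, Nat.choose_zero_right, Nat.cast_one, one_mul] at hsplit
    have : ∑ j ∈ Finset.Ico 1 (r + 1), (-1 : ZMod p) ^ j * (r.choose j : ZMod p) = -1 := by
      linear_combination -hsplit
    rw [this]; ring
end

section
/- Let H be a finite-dimensional Hopf algebra over a field k, with antipode S and Sweedler power maps P^{(n)}. Then there exists a nonzero polynomial f = Σ_{i=0}^{m} f_i x^i ∈ k[x] with m ≤ (dim_k H)^2 and with nonzero constant coefficient f_0 ≠ 0, such that Σ_{i=0}^{m} f_i · Tr(S ∘ P^{(n+i)}) = 0 for all n ∈ ℕ. In particular, the sequence of indicators {ν_n(H)}_{n≥1} is linearly recursive and the degree of its minimal polynomial is at most (dim_k H)^2. -/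
open scoped TensorProduct

/-- The Sweedler power maps `P^(n) : H →ₗ[k] H` of a bialgebra: convolution powers of the
identity, defined by `P^(0) = u ∘ ε` and `P^(n+1) = m ∘ (P^(n) ⊗ id) ∘ Δ`. -/
noncomputable def sweedlerPower (k H : Type*) [CommSemiring k] [Semiring H]
    [Bialgebra k H] : ℕ → H →ₗ[k] H
  | 0 => (Algebra.linearMap k H) ∘ₗ (Coalgebra.counit : H →ₗ[k] k)
  | n + 1 => (LinearMap.mul' k H) ∘ₗ
      (TensorProduct.map (sweedlerPower k H n) LinearMap.id) ∘ₗ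
      (Coalgebra.comul : H →ₗ[k] H ⊗[k] H)


section Conv

variable {k H : Type*} [CommSemiring k] [Semiring H] [Bialgebra k H]

noncomputable def conv (f g : H →ₗ[k] H) : H →ₗ[k] H :=
  LinearMap.mul' k H ∘ₗ TensorProduct.map f g ∘ₗ (Coalgebra.comul : H →ₗ[k] H ⊗[k] H)

lemma conv_assoc (f g h : H →ₗ[k] H) :
    conv (conv f g) h = conv f (conv g h) := by
  have key : (LinearMap.mul' k H ∘ₗ TensorProduct.map (LinearMap.mul' k H) LinearMap.id ∘ₗ
      TensorProduct.map (TensorProduct.map f g) h : (H ⊗[k] H) ⊗[k] H →ₗ[k] H) =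
      (LinearMap.mul' k H ∘ₗ TensorProduct.map LinearMap.id (LinearMap.mul' k H) ∘ₗ
        TensorProduct.map f (TensorProduct.map g h)) ∘ₗ
      (TensorProduct.assoc k H H H).toLinearMap := by
    apply TensorProduct.ext_threefold
    intro x y z
    simp [mul_assoc]
  have e1 : TensorProduct.map (conv f g) h
      = TensorProduct.map (LinearMap.mul' k H) LinearMap.id ∘ₗ
        TensorProduct.map (TensorProduct.map f g) h ∘ₗ
        TensorProduct.map (Coalgebra.comul (R := k) (A := H)) LinearMap.id := by
    rw [← TensorProduct.map_comp, ← TensorProduct.map_comp]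
    simp [conv]
  have e2 : TensorProduct.map f (conv g h)
      = TensorProduct.map LinearMap.id (LinearMap.mul' k H) ∘ₗ
        TensorProduct.map f (TensorProduct.map g h) ∘ₗ
        TensorProduct.map LinearMap.id (Coalgebra.comul (R := k) (A := H)) := by
    rw [← TensorProduct.map_comp, ← TensorProduct.map_comp]
    simp [conv]
  have coassoc' : (TensorProduct.assoc k H H H).toLinearMap ∘ₗ
      TensorProduct.map (Coalgebra.comul) LinearMap.id ∘ₗ (Coalgebra.comul : H →ₗ[k] H ⊗[k] H)
      = TensorProduct.map LinearMap.id Coalgebra.comul ∘ₗ Coalgebra.comul :=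
    Coalgebra.coassoc
  apply LinearMap.ext; intro a
  have h1 := LinearMap.congr_fun e1 (Coalgebra.comul (R := k) a)
  have h2 := LinearMap.congr_fun e2 (Coalgebra.comul (R := k) a)
  have hk := LinearMap.congr_fun key
    (TensorProduct.map (Coalgebra.comul (R := k) (A := H)) LinearMap.id
      (Coalgebra.comul (R := k) a))
  have hc := LinearMap.congr_fun coassoc' a
  simp only [LinearMap.comp_apply, LinearEquiv.coe_coe] at h1 h2 hk hc
  show LinearMap.mul' k H (TensorProduct.map (conv f g) h (Coalgebra.comul a)) =
    LinearMap.mul' k H (TensorProduct.map f (conv g h) (Coalgebra.comul a))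
  rw [h1, h2, hk, hc]

lemma conv_counit (f : H →ₗ[k] H) :
    conv f ((Algebra.linearMap k H) ∘ₗ (Coalgebra.counit : H →ₗ[k] k)) = f := by
  have h1 : TensorProduct.map f ((Algebra.linearMap k H) ∘ₗ (Coalgebra.counit : H →ₗ[k] k))
      = TensorProduct.map f (Algebra.linearMap k H) ∘ₗ
        TensorProduct.map LinearMap.id (Coalgebra.counit : H →ₗ[k] k) := by
    rw [← TensorProduct.map_comp]
    simp
  apply LinearMap.ext; intro a
  have h2 : TensorProduct.map (LinearMap.id)
      (Coalgebra.counit (R := k) (A := H)) (Coalgebra.comul a) = a ⊗ₜ[k] (1 : k) :=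
    Coalgebra.lTensor_counit_comul a
  show LinearMap.mul' k H
    (TensorProduct.map f ((Algebra.linearMap k H) ∘ₗ (Coalgebra.counit : H →ₗ[k] k))
      (Coalgebra.comul a)) = f a
  rw [h1, LinearMap.comp_apply, h2]
  simp

end Conv

section Hopf

variable {k H : Type*} [CommSemiring k] [Semiring H] [HopfAlgebra k H]

lemma conv_antipode_id :
    conv (HopfAlgebra.antipode (R := k) (A := H)) LinearMap.id
      = (Algebra.linearMap k H) ∘ₗ (Coalgebra.counit : H →ₗ[k] k) :=
  HopfAlgebra.mul_antipode_rTensor_comul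

lemma conv_id_antipode :
    conv LinearMap.id (HopfAlgebra.antipode (R := k) (A := H))
      = (Algebra.linearMap k H) ∘ₗ (Coalgebra.counit : H →ₗ[k] k) :=
  HopfAlgebra.mul_antipode_lTensor_comul

end Hopf

section T

variable (k H : Type*) [CommSemiring k] [Semiring H] [Bialgebra k H]

noncomputable def convT : Module.End k (H →ₗ[k] H) where
  toFun f := LinearMap.mul' k H ∘ₗ TensorProduct.map f LinearMap.id ∘ₗ
    (Coalgebra.comul : H →ₗ[k] H ⊗[k] H)
  map_add' f g := by
    simp only [TensorProduct.map_add_left, LinearMap.add_comp, LinearMap.comp_add]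
  map_smul' c f := by
    simp only [TensorProduct.map_smul_left, LinearMap.smul_comp, LinearMap.comp_smul,
      RingHom.id_apply]

lemma convT_apply (f : H →ₗ[k] H) : convT k H f = conv f LinearMap.id := rfl

lemma sweedler_succ (n : ℕ) :
    sweedlerPower k H (n + 1) = convT k H (sweedlerPower k H n) := rfl

lemma sweedler_pow (n i : ℕ) :
    (convT k H ^ i) (sweedlerPower k H n) = sweedlerPower k H (n + i) := by
  induction i generalizing n with
  | zero => rfl
  | succ i ih =>
      rw [pow_succ', Module.End.mul_apply, ih, ← sweedler_succ, ← Nat.add_assoc]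

end T

section TUnit

variable (k H : Type*) [CommSemiring k] [Semiring H] [HopfAlgebra k H]

noncomputable def convT' : Module.End k (H →ₗ[k] H) :=
  { toFun := fun f => LinearMap.mul' k H ∘ₗ
      TensorProduct.map f (HopfAlgebra.antipode (R := k)) ∘ₗ
      (Coalgebra.comul : H →ₗ[k] H ⊗[k] H)
    map_add' := fun f g => by
      simp only [TensorProduct.map_add_left, LinearMap.add_comp, LinearMap.comp_add]
    map_smul' := fun c f => by
      simp only [TensorProduct.map_smul_left, LinearMap.smul_comp, LinearMap.comp_smul,
        RingHom.id_apply] }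

lemma convT'_apply (f : H →ₗ[k] H) :
    convT' k H f = conv f (HopfAlgebra.antipode (R := k)) := rfl

lemma convT_mul_convT' : convT k H * convT' k H = 1 := by
  apply LinearMap.ext; intro f
  show convT k H (convT' k H f) = f
  rw [convT_apply, convT'_apply, conv_assoc, conv_antipode_id, conv_counit]

lemma convT'_mul_convT : convT' k H * convT k H = 1 := by
  apply LinearMap.ext; intro f
  show convT' k H (convT k H f) = f
  rw [convT_apply, convT'_apply, conv_assoc, conv_id_antipode, conv_counit]

end TUnit

/-- For a finite-dimensional Hopf algebra `H` over a field `k` there is a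
nonzero polynomial `f` of degree at most `(dim_k H)^2` with nonzero constant coefficient such
that `∑ᵢ fᵢ · Tr(S ∘ P^(n+i)) = 0` for all `n`; in particular, the indicator sequence
`ν_n(H) = Tr(S ∘ P^(n-1))` is linearly recursive with minimal polynomial of degree at most
`(dim_k H)^2`. -/
theorem indicators_linearly_recursive
    (k H : Type*) [Field k] [Ring H] [HopfAlgebra k H] [FiniteDimensional k H] :
    ∃ f : Polynomial k, f ≠ 0 ∧ f.natDegree ≤ (Module.finrank k H) ^ 2 ∧ f.coeff 0 ≠ 0 ∧
      ∀ n : ℕ, ∑ i ∈ Finset.range (f.natDegree + 1),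
        f.coeff i *
          LinearMap.trace k H (HopfAlgebra.antipode (R := k) ∘ₗ sweedlerPower k H (n + i)) = 0 := by
  set cp := LinearMap.charpoly (convT k H) with hcp
  have hmonic : cp.Monic := LinearMap.charpoly_monic (convT k H)
  have hdeg : cp.natDegree = Module.finrank k (H →ₗ[k] H) := LinearMap.charpoly_natDegree (convT k H)
  have hdet : LinearMap.det (convT k H) ≠ 0 := by
    have h1 : LinearMap.det (convT k H ∘ₗ convT' k H) = 1 := by
      have : convT k H ∘ₗ convT' k H = LinearMap.id := by
        have := convT_mul_convT' k H
        exact this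
      rw [this, LinearMap.det_id]
    rw [LinearMap.det_comp] at h1
    exact left_ne_zero_of_mul_eq_one h1
  refine ⟨cp, hmonic.ne_zero, ?_, ?_, ?_⟩
  · rw [hdeg, Module.finrank_linearMap, pow_two]
  · intro h0
    rw [LinearMap.det_eq_sign_charpoly_coeff, h0, mul_zero] at hdet
    exact hdet rfl
  · intro n
    have haev : (Polynomial.aeval (convT k H) cp) (sweedlerPower k H n) = 0 := by
      rw [LinearMap.aeval_self_charpoly]
      rfl
    rw [Polynomial.aeval_eq_sum_range, LinearMap.sum_apply] at haev
    simp only [LinearMap.smul_apply, sweedler_pow] at haev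
    set Φ : (H →ₗ[k] H) →ₗ[k] k :=
      (LinearMap.trace k H) ∘ₗ (LinearMap.llcomp k H H H (HopfAlgebra.antipode (R := k)))
      with hΦ
    calc ∑ i ∈ Finset.range (cp.natDegree + 1),
          cp.coeff i *
            LinearMap.trace k H (HopfAlgebra.antipode (R := k) ∘ₗ sweedlerPower k H (n + i))
        = Φ (∑ i ∈ Finset.range (cp.natDegree + 1), cp.coeff i • sweedlerPower k H (n + i)) := by
          rw [map_sum]
          refine Finset.sum_congr rfl fun i _ => ?_
          rw [map_smul, smul_eq_mul]
          rfl
      _ = 0 := by rw [haev, map_zero]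
end

section
/- Let H and H' be finite-dimensional Hopf algebras over a field k, and endow the tensor product H ⊗_k H' with its standard Hopf algebra structure. Then for every integer n ≥ 1, the n-th indicator of the tensor product is the product of the indicators: ν_n(H ⊗_k H') = ν_n(H) · ν_n(H'). -/
open scoped TensorProduct

lemma sweedlerPower_tensor (k H H' : Type u) [Field k] [Ring H] [Ring H']
    [HopfAlgebra k H] [HopfAlgebra k H'] (m : ℕ) :
    sweedlerPower k (H ⊗[k] H') m
      = TensorProduct.map (sweedlerPower k H m) (sweedlerPower k H' m) := by
  induction m with
  | zero =>
      apply TensorProduct.ext'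
      intro x y
      simp [sweedlerPower, TensorProduct.counit_def,
        Algebra.TensorProduct.algebraMap_apply, Algebra.algebraMap_eq_smul_one,
        TensorProduct.smul_tmul_smul, smul_smul, TensorProduct.smul_tmul',
        Algebra.TensorProduct.one_def, mul_comm]
  | succ m ih =>
      rw [sweedlerPower, ih, sweedlerPower, sweedlerPower,
        TensorProduct.comul_def]
      have key : (LinearMap.mul' k (H ⊗[k] H')) ∘ₗ
          (TensorProduct.map
            (TensorProduct.map (sweedlerPower k H m) (sweedlerPower k H' m))
            (LinearMap.id)) ∘ₗ
          (TensorProduct.tensorTensorTensorComm k H H H' H').toLinearMap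
        = TensorProduct.map
            ((LinearMap.mul' k H) ∘ₗ TensorProduct.map (sweedlerPower k H m) LinearMap.id)
            ((LinearMap.mul' k H') ∘ₗ TensorProduct.map (sweedlerPower k H' m) LinearMap.id) := by
        apply TensorProduct.ext'
        intro a b
        induction a using TensorProduct.induction_on with
        | zero => simp only [TensorProduct.zero_tmul, map_zero]
        | tmul x y =>
            induction b using TensorProduct.induction_on with
            | zero => simp only [TensorProduct.tmul_zero, map_zero]
            | tmul z w =>
                simp [TensorProduct.tensorTensorTensorComm_tmul,
                  Algebra.TensorProduct.tmul_mul_tmul]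
            | add u v hu hv =>
                simp only [TensorProduct.tmul_add, map_add, hu, hv]
        | add u v hu hv => simp only [TensorProduct.add_tmul, map_add, hu, hv]
      calc (LinearMap.mul' k (H ⊗[k] H')) ∘ₗ
            (TensorProduct.map
              (TensorProduct.map (sweedlerPower k H m) (sweedlerPower k H' m))
              (LinearMap.id)) ∘ₗ
            ((TensorProduct.tensorTensorTensorComm k H H H' H').toLinearMap ∘ₗ
              TensorProduct.map Coalgebra.comul Coalgebra.comul)
          = ((LinearMap.mul' k (H ⊗[k] H')) ∘ₗ
              (TensorProduct.map
                (TensorProduct.map (sweedlerPower k H m) (sweedlerPower k H' m))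
                (LinearMap.id)) ∘ₗ
              (TensorProduct.tensorTensorTensorComm k H H H' H').toLinearMap) ∘ₗ
              TensorProduct.map Coalgebra.comul Coalgebra.comul := by
            simp only [LinearMap.comp_assoc]
        _ = _ := by
            rw [key, ← TensorProduct.map_comp]
            simp only [LinearMap.comp_assoc]

/-- For finite-dimensional Hopf algebras `H`, `H'` over a field `k`, the
`n`-th indicator of the tensor product Hopf algebra `H ⊗[k] H'` (whose antipode is
`S_H ⊗ S_H'`) is the product of the indicators: `ν_n(H ⊗ H') = ν_n(H) · ν_n(H')` for all
`n ≥ 1`. -/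
theorem indicator_tensorProduct
    (k H H' : Type u) [Field k] [Ring H] [Ring H']
    [HopfAlgebra k H] [HopfAlgebra k H']
    [FiniteDimensional k H] [FiniteDimensional k H'] (n : ℕ) (hn : 1 ≤ n) :
    LinearMap.trace k (H ⊗[k] H')
        ((TensorProduct.map (HopfAlgebra.antipode (R := k) (A := H))
            (HopfAlgebra.antipode (R := k) (A := H'))) ∘ₗ
          sweedlerPower k (H ⊗[k] H') (n - 1)) =
      LinearMap.trace k H (HopfAlgebra.antipode (R := k) ∘ₗ sweedlerPower k H (n - 1)) *
        LinearMap.trace k H' (HopfAlgebra.antipode (R := k) ∘ₗ sweedlerPower k H' (n - 1)) := by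
  rw [sweedlerPower_tensor, ← TensorProduct.map_comp, LinearMap.trace_tensorProduct']
end
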